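/- arXiv:1411.1782 — 4 statements merged into one kernel-verified Lean document; each statement's English description precedes it below -/
import Mathlib

section
/- Let P be an abstract polytope of rank d that is in class 2_I, and let j ∈ {0, …, d−1} with j ∉ I. Then Γ(P) acts transitively on the chains of cotype {j}: for any two chains Ψ and Ω in P, each containing exactly one element of every rank in {−1, 0, …, d} except rank j, there is an automorphism γ ∈ Γ(P) with γ(Ψ) = Ω. -/
/-! Generic definitions about flags, flag orbits, and abstract polytopes. -/

variable {α : Type*} [PartialOrder α]

/-- Two flags (maximal chains) are in the same orbit of the automorphism group
(the group of order automorphisms) if some order automorphism maps one onto the other. -/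
def SameFlagOrbit (Φ Ψ : Flag α) : Prop :=
  ∃ γ : α ≃o α, γ '' (Φ : Set α) = (Ψ : Set α)

/-- The automorphism group has exactly two orbits on the flags. -/
def TwoFlagOrbits (α : Type*) [PartialOrder α] : Prop :=
  ∃ Φ Ψ : Flag α, ¬ SameFlagOrbit Φ Ψ ∧
    ∀ Ω : Flag α, SameFlagOrbit Ω Φ ∨ SameFlagOrbit Ω Ψ

/-- `Ψ` is the flag `Φ^i`: it differs from `Φ` in exactly the rank-`i` element
(with respect to the rank function `rk`). -/
def IsIAdjacent (rk : α → ℤ) (i : ℤ) (Φ Ψ : Flag α) : Prop :=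
  Φ ≠ Ψ ∧ ∀ x : α, rk x ≠ i → (x ∈ Φ ↔ x ∈ Ψ)

/-- A two-orbit polytope (with rank function `rk`, adjacency indices `0, …, n-1`)
is in class `2_I` if, for every flag `Φ` and every `i < n`, the `i`-adjacent flag `Φ^i`
lies in the same orbit as `Φ` exactly when `i ∈ I`. -/
def InClass (rk : α → ℤ) (n : ℕ) (I : Set ℕ) : Prop :=
  TwoFlagOrbits α ∧
    ∀ (Φ Ψ : Flag α) (i : ℕ), i < n → IsIAdjacent rk i Φ Ψ →
      (SameFlagOrbit Φ Ψ ↔ i ∈ I)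

/-- An abstract polytope of rank `d`: a bounded poset, graded by a rank function `rk`
taking values `-1, 0, …, d`, in which every flag (maximal chain) has exactly one element
of each rank, satisfying the diamond condition and strong flag-connectivity. -/
structure IsAbstractPolytope (α : Type*) [PartialOrder α] [BoundedOrder α]
    (rk : α → ℤ) (d : ℕ) : Prop where
  rk_bot : rk ⊥ = -1
  rk_top : rk ⊤ = d
  rk_strictMono : StrictMono rk
  rk_cover : ∀ x y : α, x ⋖ y → rk y = rk x + 1
  flag_ranks : ∀ (Φ : Flag α) (i : ℤ), -1 ≤ i → i ≤ d → ∃! x, x ∈ Φ ∧ rk x = i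
  diamond : ∀ x y : α, x < y → rk y = rk x + 2 →
    ∃ a b : α, a ≠ b ∧ ∀ z : α, (x < z ∧ z < y) ↔ (z = a ∨ z = b)
  connected : ∀ Φ Ψ : Flag α, ∃ (n : ℕ) (c : Fin (n + 1) → Flag α),
    c 0 = Φ ∧ c (Fin.last n) = Ψ ∧
    (∀ k : Fin n, ∃ i : ℤ, IsIAdjacent rk i (c k.castSucc) (c k.succ)) ∧
    (∀ k, (Φ : Set α) ∩ (Ψ : Set α) ⊆ (c k : Set α))
/-- A chain of cotype `{j}`: a chain in `P` containing exactly one element of every rank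
in `{-1, 0, …, d}` except rank `j`, and nothing else. -/
def IsCotypeChain {α : Type*} [PartialOrder α] (rk : α → ℤ) (d : ℕ) (j : ℤ)
    (C : Set α) : Prop :=
  IsChain (· ≤ ·) C ∧
  (∀ x ∈ C, -1 ≤ rk x ∧ rk x ≤ d ∧ rk x ≠ j) ∧
  (∀ i : ℤ, -1 ≤ i → i ≤ d → i ≠ j → ∃! x, x ∈ C ∧ rk x = i)

/-! ### Auxiliary lemmas -/

section Aux

lemma SameFlagOrbit.refl' (Φ : Flag α) : SameFlagOrbit Φ Φ := ⟨OrderIso.refl α, by simp⟩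

lemma SameFlagOrbit.symm' {Φ Ψ : Flag α} (h : SameFlagOrbit Φ Ψ) : SameFlagOrbit Ψ Φ := by
  obtain ⟨γ, hγ⟩ := h
  exact ⟨γ.symm, by rw [← hγ, ← Set.image_comp]; simp⟩

lemma SameFlagOrbit.trans' {Φ Ψ Ω : Flag α} (h : SameFlagOrbit Φ Ψ) (h' : SameFlagOrbit Ψ Ω) :
    SameFlagOrbit Φ Ω := by
  obtain ⟨γ, hγ⟩ := h; obtain ⟨δ, hδ⟩ := h'
  exact ⟨γ.trans δ, by rw [← hδ, ← hγ, ← Set.image_comp]; rfl⟩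

variable [BoundedOrder α] {rk : α → ℤ} {d : ℕ}

lemma rk_ge (hP : IsAbstractPolytope α rk d) (x : α) : -1 ≤ rk x := by
  rw [← hP.rk_bot]; exact hP.rk_strictMono.monotone bot_le

lemma rk_le (hP : IsAbstractPolytope α rk d) (x : α) : rk x ≤ d := by
  rw [← hP.rk_top]; exact hP.rk_strictMono.monotone le_top

lemma chain_rk_lt (hP : IsAbstractPolytope α rk d) {C : Set α} (hC : IsChain (· ≤ ·) C)
    {x y : α} (hx : x ∈ C) (hy : y ∈ C) (h : rk x < rk y) : x < y := by
  have hne : x ≠ y := fun he => by rw [he] at h; exact lt_irrefl _ h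
  rcases hC hx hy hne with h' | h'
  · exact lt_of_le_of_ne h' hne
  · exact absurd (hP.rk_strictMono.monotone h') (by omega)

lemma exists_covby (hP : IsAbstractPolytope α rk d) {x : α} (hx : 0 ≤ rk x) :
    ∃ y, y ⋖ x ∧ rk y = rk x - 1 := by
  obtain ⟨M, hM, hxM⟩ :=
    (Set.subsingleton_singleton (a := x)).isChain (r := (· ≤ ·)) |>.exists_maxChain
  let Φ : Flag α := Flag.ofIsMaxChain M hM
  have hxΦ : x ∈ Φ := hxM rfl
  obtain ⟨y, ⟨hyΦ, hyr⟩, -⟩ := hP.flag_ranks Φ (rk x - 1) (by omega)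
    (by have := rk_le hP x; omega)
  have hlt : y < x := chain_rk_lt hP Φ.chain_le hyΦ hxΦ (by omega)
  refine ⟨y, ⟨hlt, fun z hz1 hz2 => ?_⟩, hyr⟩
  have := hP.rk_strictMono hz1; have := hP.rk_strictMono hz2; omega

lemma rk_apply (hP : IsAbstractPolytope α rk d) (γ : α ≃o α) (x : α) : rk (γ x) = rk x := by
  have key : ∀ n : ℕ, ∀ x : α, (rk x + 1).toNat = n → rk (γ x) = rk x := by
    intro n
    induction n using Nat.strong_induction_on with
    | _ n ih =>
      intro x hxn
      have hbot := hP.rk_bot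
      rcases eq_or_lt_of_le (rk_ge hP x) with h | h
      · have hxb : x = ⊥ := by
          by_contra hne
          have := hP.rk_strictMono (bot_lt_iff_ne_bot.2 hne)
          omega
        rw [hxb, γ.map_bot, hP.rk_bot]
      · obtain ⟨y, hcov, hyr⟩ := exists_covby hP (x := x) (by omega)
        have hcov' : γ y ⋖ γ x := (apply_covBy_apply_iff γ).2 hcov
        have h1 := hP.rk_cover _ _ hcov
        have h2 := hP.rk_cover _ _ hcov'
        have h3 : rk (γ y) = rk y := ih (rk y + 1).toNat (by omega) y rfl
        omega
  exact key _ x rfl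

lemma flag_of_cotype (hP : IsAbstractPolytope α rk d) {j : ℤ} (hj0 : 0 ≤ j) (hjd : j ≤ d)
    {C : Set α} (hC : IsCotypeChain rk d j C) :
    ∃ (Φ : Flag α) (b : α), rk b = j ∧ b ∉ C ∧ (Φ : Set α) = insert b C := by
  obtain ⟨M, hM, hCM⟩ := hC.1.exists_maxChain
  let Φ : Flag α := Flag.ofIsMaxChain M hM
  have hΦM : (Φ : Set α) = M := rfl
  obtain ⟨b, ⟨hbΦ, hbr⟩, hbu⟩ := hP.flag_ranks Φ j (by omega) hjd
  have hbC : b ∉ C := fun hb => (hC.2.1 b hb).2.2 hbr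
  refine ⟨Φ, b, hbr, hbC, Set.Subset.antisymm ?_ ?_⟩
  · intro x hxΦ
    by_cases hxj : rk x = j
    · exact Set.mem_insert_iff.2 (Or.inl (hbu x ⟨hxΦ, hxj⟩))
    · obtain ⟨c, ⟨hcC, hcr⟩, -⟩ := hC.2.2 (rk x) (rk_ge hP x) (rk_le hP x) hxj
      obtain ⟨u, -, huu⟩ := hP.flag_ranks Φ (rk x) (rk_ge hP x) (rk_le hP x)
      have h1 : x = u := huu x ⟨hxΦ, rfl⟩
      have h2 : c = u := huu c ⟨hCM hcC, hcr⟩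
      exact Set.mem_insert_iff.2 (Or.inr (by rw [h1, ← h2]; exact hcC))
  · intro x hx
    rcases Set.mem_insert_iff.1 hx with rfl | hx
    · exact hbΦ
    · exact hCM hx

lemma image_insert_eq (hP : IsAbstractPolytope α rk d) {j : ℤ} (γ : α ≃o α) {C D : Set α}
    {a b : α} (hC : ∀ x ∈ C, rk x ≠ j) (hD : ∀ x ∈ D, rk x ≠ j)
    (ha : rk a = j) (hb : rk b = j)
    (h : γ '' insert a C = insert b D) : γ '' C = D := by
  ext y
  constructor
  · rintro ⟨x, hx, rfl⟩
    have hmem : γ x ∈ insert b D := h ▸ Set.mem_image_of_mem γ (Set.mem_insert_of_mem a hx)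
    rcases Set.mem_insert_iff.1 hmem with he | hy
    · have : rk x = j := by rw [← rk_apply hP γ x, he]; exact hb
      exact absurd this (hC x hx)
    · exact hy
  · intro hy
    have hmem : y ∈ γ '' insert a C := h ▸ Set.mem_insert_of_mem b hy
    obtain ⟨x, hx, rfl⟩ := hmem
    rcases Set.mem_insert_iff.1 hx with rfl | hx
    · refine absurd ?_ (hD _ hy)
      rw [rk_apply hP γ]; exact ha
    · exact Set.mem_image_of_mem γ hx

end Aux

/-- If `P` is an abstract polytope of rank `d` in class `2_I` and
`j ∈ {0, …, d-1}` with `j ∉ I`, then `Γ(P)` acts transitively on the chains of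
cotype `{j}`. -/
theorem transitive_on_cotype_chains {α : Type*} [PartialOrder α] [BoundedOrder α]
    (rk : α → ℤ) (d : ℕ) (hP : IsAbstractPolytope α rk d)
    (I : Set ℕ) (h2 : InClass rk d I)
    (j : ℕ) (hj : j < d) (hjI : j ∉ I)
    (Ψ Ω : Set α) (hΨ : IsCotypeChain rk d j Ψ) (hΩ : IsCotypeChain rk d j Ω) :
    ∃ γ : α ≃o α, γ '' Ψ = Ω := by
  have hj0 : (0 : ℤ) ≤ (j : ℤ) := by positivity
  have hjd : (j : ℤ) ≤ (d : ℤ) := by exact_mod_cast hj.le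
  have hΨj : ∀ x ∈ Ψ, rk x ≠ (j : ℤ) := fun x hx => (hΨ.2.1 x hx).2.2
  have hΩj : ∀ x ∈ Ω, rk x ≠ (j : ℤ) := fun x hx => (hΩ.2.1 x hx).2.2
  obtain ⟨Φ₁, a, har, -, hΦ₁⟩ := flag_of_cotype hP hj0 hjd hΨ
  obtain ⟨Φ₂, b, hbr, hbΩ, hΦ₂⟩ := flag_of_cotype hP hj0 hjd hΩ
  -- the elements of `Ω` of ranks `j - 1` and `j + 1`
  obtain ⟨x, ⟨hxΩ, hxr⟩, hxu⟩ := hΩ.2.2 ((j : ℤ) - 1) (by omega) (by omega) (by omega)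
  obtain ⟨y, ⟨hyΩ, hyr⟩, hyu⟩ := hΩ.2.2 ((j : ℤ) + 1) (by omega) (by omega) (by omega)
  have hxy : x < y := chain_rk_lt hP hΩ.1 hxΩ hyΩ (by omega)
  obtain ⟨a₁, a₂, ha12, hmid⟩ := hP.diamond x y hxy (by omega)
  have hxb : x < b := chain_rk_lt hP Φ₂.chain_le
    (show x ∈ (Φ₂ : Set α) by rw [hΦ₂]; exact Set.mem_insert_of_mem _ hxΩ)
    (show b ∈ (Φ₂ : Set α) by rw [hΦ₂]; exact Set.mem_insert _ _) (by omega)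
  have hby : b < y := chain_rk_lt hP Φ₂.chain_le
    (show b ∈ (Φ₂ : Set α) by rw [hΦ₂]; exact Set.mem_insert _ _)
    (show y ∈ (Φ₂ : Set α) by rw [hΦ₂]; exact Set.mem_insert_of_mem _ hyΩ) (by omega)
  -- let b' be the other element in the diamond
  obtain ⟨b', hb'ne, hxb', hb'y⟩ : ∃ b', b' ≠ b ∧ x < b' ∧ b' < y := by
    rcases (hmid b).1 ⟨hxb, hby⟩ with rfl | rfl
    · exact ⟨a₂, fun h => ha12 h.symm, ((hmid a₂).2 (Or.inr rfl)).1, ((hmid a₂).2 (Or.inr rfl)).2⟩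
    · exact ⟨a₁, ha12, ((hmid a₁).2 (Or.inl rfl)).1, ((hmid a₁).2 (Or.inl rfl)).2⟩
  have hb'r : rk b' = (j : ℤ) := by
    have h1 := hP.rk_strictMono hxb'
    have h2 := hP.rk_strictMono hb'y
    omega
  have hb'Ω : b' ∉ Ω := fun h => hΩj b' h hb'r
  -- comparability of b' with elements of Ω
  have hcomp : ∀ w ∈ Ω, w < b' ∨ b' < w := by
    intro w hw
    obtain ⟨hw1, hw2, hw3⟩ := hΩ.2.1 w hw
    rcases lt_or_gt_of_ne hw3 with h | h
    · left
      rcases eq_or_lt_of_le (show rk w ≤ rk x by omega) with he | hlt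
      · have hwx : w = x := hxu w ⟨hw, by omega⟩
        rw [hwx]; exact hxb'
      · exact lt_trans (chain_rk_lt hP hΩ.1 hw hxΩ (by omega)) hxb'
    · right
      rcases eq_or_lt_of_le (show rk y ≤ rk w by omega) with he | hlt
      · have hwy : w = y := hyu w ⟨hw, by omega⟩
        rw [hwy]; exact hb'y
      · exact lt_trans hb'y (chain_rk_lt hP hΩ.1 hyΩ hw (by omega))
  -- insert b' Ω is a maximal chain
  have hchain : IsChain (· ≤ ·) (insert b' Ω) :=
    hΩ.1.insert fun w hw _ => (hcomp w hw).elim (fun h => Or.inr h.le) (fun h => Or.inl h.le)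
  have hmax : IsMaxChain (· ≤ ·) (insert b' Ω) := by
    refine ⟨hchain, fun s hs hsub => Set.Subset.antisymm hsub fun t ht => ?_⟩
    by_cases htj : rk t = (j : ℤ)
    · -- t has rank j; compare with x, y ∈ s
      have hxs : x ∈ s := hsub (Set.mem_insert_of_mem _ hxΩ)
      have hys : y ∈ s := hsub (Set.mem_insert_of_mem _ hyΩ)
      have hxt : x < t := chain_rk_lt hP hs hxs ht (by omega)
      have hty : t < y := chain_rk_lt hP hs ht hys (by omega)
      have hb's : b' ∈ s := hsub (Set.mem_insert _ _)
      by_contra htmem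
      have htb' : t ≠ b' := fun he => htmem (he ▸ Set.mem_insert _ _)
      rcases hs ht hb's htb' with h | h
      · exact absurd (hP.rk_strictMono (lt_of_le_of_ne h htb')) (by omega)
      · exact absurd (hP.rk_strictMono (lt_of_le_of_ne h (Ne.symm htb'))) (by omega)
    · obtain ⟨w, ⟨hwΩ, hwr⟩, -⟩ := hΩ.2.2 (rk t) (rk_ge hP t) (rk_le hP t) htj
      have hws : w ∈ s := hsub (Set.mem_insert_of_mem _ hwΩ)
      have : t = w := by
        by_contra hne
        rcases hs ht hws hne with h | h
        · exact absurd (hP.rk_strictMono (lt_of_le_of_ne h hne)) (by omega)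
        · exact absurd (hP.rk_strictMono (lt_of_le_of_ne h (Ne.symm hne))) (by omega)
      exact this ▸ Set.mem_insert_of_mem _ hwΩ
  set Φ₂' : Flag α := Flag.ofIsMaxChain _ hmax with hΦ₂'def
  have hΦ₂' : (Φ₂' : Set α) = insert b' Ω := rfl
  -- Φ₂' is j-adjacent to Φ₂
  have hadj : IsIAdjacent rk j Φ₂' Φ₂ := by
    constructor
    · intro he
      have : b' ∈ (Φ₂ : Set α) := by rw [← he, hΦ₂']; exact Set.mem_insert _ _
      rw [hΦ₂] at this
      rcases Set.mem_insert_iff.1 this with h | h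
      · exact hb'ne h
      · exact hb'Ω h
    · intro z hz
      show z ∈ (Φ₂' : Set α) ↔ z ∈ (Φ₂ : Set α)
      rw [hΦ₂', hΦ₂]
      constructor
      · rintro (rfl | h)
        · exact absurd hb'r hz
        · exact Set.mem_insert_of_mem _ h
      · rintro (rfl | h)
        · exact absurd hbr hz
        · exact Set.mem_insert_of_mem _ h
  have hnotadj : ¬ SameFlagOrbit Φ₂' Φ₂ := fun h =>
    hjI ((h2.2 Φ₂' Φ₂ j hj hadj).1 h)
  -- get an automorphism mapping Φ₁ to either Φ₂ or Φ₂'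
  by_cases hsame : SameFlagOrbit Φ₁ Φ₂
  · obtain ⟨γ, hγ⟩ := hsame
    rw [hΦ₁, hΦ₂] at hγ
    exact ⟨γ, image_insert_eq hP γ hΨj hΩj har hbr hγ⟩
  · have horbit : SameFlagOrbit Φ₁ Φ₂' := by
      obtain ⟨A, B, -, hall⟩ := h2.1
      rcases hall Φ₁ with h1 | h1 <;> rcases hall Φ₂' with h3 | h3
      · exact h1.trans' h3.symm'
      · rcases hall Φ₂ with h2' | h2'
        · exact absurd (h1.trans' h2'.symm') hsame
        · exact absurd (h3.trans' h2'.symm') hnotadj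
      · rcases hall Φ₂ with h2' | h2'
        · exact absurd (h3.trans' h2'.symm') hnotadj
        · exact absurd (h1.trans' h2'.symm') hsame
      · exact h1.trans' h3.symm'
    obtain ⟨γ, hγ⟩ := horbit
    rw [hΦ₁, hΦ₂'] at hγ
    exact ⟨γ, image_insert_eq hP γ hΨj hΩj har hb'r hγ⟩
end

section
/- Let P be an abstract polytope of rank d ≥ 2 in class 2_{{0, 1, …, d−2}} (combinatorially two-orbit and facet-intransitive). Fix a flag Φ, and suppose γ_0, …, γ_{d−2}, γ′ ∈ Γ(P) satisfy γ_i(Φ) = Φ^i for each i ∈ {0, …, d−2} and γ′(Φ) = ((Φ^{d−1})^{d−2})^{d−1}. Then Γ(P) is generated by {γ_0, …, γ_{d−2}, γ′}. -/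
/-! Generic definitions about flags, flag orbits, and abstract polytopes. -/

variable {α : Type*} [PartialOrder α]

namespace APGen

variable {α : Type*} [PartialOrder α] [BoundedOrder α] {rk : α → ℤ} {d : ℕ}

theorem adj_symm {i : ℤ} {Φ Ψ : Flag α} (h : IsIAdjacent rk i Φ Ψ) : IsIAdjacent rk i Ψ Φ :=
  ⟨h.1.symm, fun x hx => (h.2 x hx).symm⟩

variable (hP : IsAbstractPolytope α rk d)
include hP

theorem rk_ge (x : α) : -1 ≤ rk x := hP.rk_bot ▸ hP.rk_strictMono.monotone bot_le

theorem rk_le (x : α) : rk x ≤ d := hP.rk_top ▸ hP.rk_strictMono.monotone le_top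

theorem eq_bot_of_rk {x : α} (h : rk x = -1) : x = ⊥ := by
  rcases eq_or_lt_of_le (bot_le : ⊥ ≤ x) with h' | h'
  · exact h'.symm
  · have := hP.rk_strictMono h'; rw [hP.rk_bot, h] at this; omega

theorem eq_top_of_rk {x : α} (h : rk x = d) : x = ⊤ := by
  rcases eq_or_lt_of_le (le_top : x ≤ ⊤) with h' | h'
  · exact h'
  · have := hP.rk_strictMono h'; rw [hP.rk_top, h] at this; omega

theorem flag_lt {Φ : Flag α} {x y : α} (hx : x ∈ Φ) (hy : y ∈ Φ) (h : rk x < rk y) : x < y := by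
  rcases Φ.le_or_le hx hy with h' | h'
  · rcases eq_or_lt_of_le h' with rfl | h'
    · omega
    · exact h'
  · rcases eq_or_lt_of_le h' with rfl | h'
    · omega
    · exact absurd (hP.rk_strictMono h') (by omega)

theorem flag_eq {Φ : Flag α} {x y : α} (hx : x ∈ Φ) (hy : y ∈ Φ) (h : rk x = rk y) : x = y := by
  rcases Φ.le_or_le hx hy with h' | h'
  · rcases eq_or_lt_of_le h' with rfl | h'
    · rfl
    · exact absurd (hP.rk_strictMono h') (by omega)
  · rcases eq_or_lt_of_le h' with rfl | h'
    · rfl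
    · exact absurd (hP.rk_strictMono h') (by omega)

theorem adj_bounds {i : ℤ} {Φ Ψ : Flag α} (h : IsIAdjacent rk i Φ Ψ) : 0 ≤ i ∧ i ≤ (d : ℤ) - 1 := by
  by_contra hc
  apply h.1
  apply Flag.ext
  ext x
  rcases eq_or_ne (rk x) i with hr | hr
  · have h1 := rk_ge hP x
    have h2 := rk_le hP x
    have : rk x = -1 ∨ rk x = (d : ℤ) := by omega
    rcases this with h3 | h3
    · rw [eq_bot_of_rk hP h3]
      simp [Φ.bot_mem, Ψ.bot_mem]
    · rw [eq_top_of_rk hP h3]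
      simp [Φ.top_mem, Ψ.top_mem]
  · exact h.2 x hr

/-- the differing elements of adjacent flags at rank `i` are distinct. -/
theorem adj_ne {i : ℤ} {Φ Ψ : Flag α} (h : IsIAdjacent rk i Φ Ψ) {x y : α}
    (hx : x ∈ Φ) (hrx : rk x = i) (hy : y ∈ Ψ) (hry : rk y = i) : x ≠ y := by
  rintro rfl
  apply h.1
  apply Flag.ext
  ext z
  rcases eq_or_ne (rk z) i with hr | hr
  · constructor
    · intro hz; rwa [flag_eq hP hz hx (by omega)]
    · intro hz; rwa [flag_eq hP hz hy (by omega)]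
  · exact h.2 z hr

theorem adj_unique {i : ℤ} {Φ Ψ₁ Ψ₂ : Flag α} (h1 : IsIAdjacent rk i Φ Ψ₁)
    (h2 : IsIAdjacent rk i Φ Ψ₂) : Ψ₁ = Ψ₂ := by
  obtain ⟨hi0, hid⟩ := adj_bounds hP h1
  obtain ⟨a, ⟨haΦ, hra⟩, -⟩ := hP.flag_ranks Φ (i - 1) (by omega) (by omega)
  obtain ⟨c, ⟨hcΦ, hrc⟩, -⟩ := hP.flag_ranks Φ (i + 1) (by omega) (by omega)
  obtain ⟨x, ⟨hxΦ, hrx⟩, -⟩ := hP.flag_ranks Φ i (by omega) (by omega)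
  obtain ⟨y₁, ⟨hy1, hry1⟩, -⟩ := hP.flag_ranks Ψ₁ i (by omega) (by omega)
  obtain ⟨y₂, ⟨hy2, hry2⟩, -⟩ := hP.flag_ranks Ψ₂ i (by omega) (by omega)
  have haΨ₁ : a ∈ Ψ₁ := (h1.2 a (by omega)).1 haΦ
  have hcΨ₁ : c ∈ Ψ₁ := (h1.2 c (by omega)).1 hcΦ
  have haΨ₂ : a ∈ Ψ₂ := (h2.2 a (by omega)).1 haΦ
  have hcΨ₂ : c ∈ Ψ₂ := (h2.2 c (by omega)).1 hcΦ
  obtain ⟨p, q, hpq, hchar⟩ := hP.diamond a c (flag_lt hP haΦ hcΦ (by omega)) (by omega)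
  have hxm : x = p ∨ x = q := (hchar x).1 ⟨flag_lt hP haΦ hxΦ (by omega), flag_lt hP hxΦ hcΦ (by omega)⟩
  have hy1m : y₁ = p ∨ y₁ = q := (hchar y₁).1 ⟨flag_lt hP haΨ₁ hy1 (by omega), flag_lt hP hy1 hcΨ₁ (by omega)⟩
  have hy2m : y₂ = p ∨ y₂ = q := (hchar y₂).1 ⟨flag_lt hP haΨ₂ hy2 (by omega), flag_lt hP hy2 hcΨ₂ (by omega)⟩
  have hxy1 : x ≠ y₁ := adj_ne hP h1 hxΦ hrx hy1 hry1
  have hxy2 : x ≠ y₂ := adj_ne hP h2 hxΦ hrx hy2 hry2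
  have hy12 : y₁ = y₂ := by
    rcases hxm with rfl | rfl <;> rcases hy1m with rfl | rfl <;> rcases hy2m with rfl | rfl <;> tauto
  apply Flag.ext
  ext z
  rcases eq_or_ne (rk z) i with hr | hr
  · constructor
    · intro hz; rw [flag_eq hP hz hy1 (by omega), hy12]; exact hy2
    · intro hz; rw [flag_eq hP hz hy2 (by omega), ← hy12]; exact hy1
  · exact ((h1.2 z hr).symm.trans (h2.2 z hr))

theorem exists_flag_mem (x : α) : ∃ Φ : Flag α, x ∈ Φ := by
  obtain ⟨M, hM, hsub⟩ := (Set.subsingleton_singleton (a := x)).isChain.exists_maxChain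
  exact ⟨Flag.ofIsMaxChain M hM, hsub rfl⟩

theorem rk_map (g : α ≃o α) (x : α) : rk (g x) = rk x := by
  suffices H : ∀ n : ℕ, ∀ x : α, rk x + 1 = n → rk (g x) = rk x by
    exact H (rk x + 1).toNat x (by have := rk_ge hP x; omega)
  intro n
  induction n with
  | zero =>
    intro x hx
    have hb : x = ⊥ := eq_bot_of_rk hP (by omega)
    subst hb
    rw [map_bot g]
  | succ n ih =>
    intro x hx
    obtain ⟨Φ, hΦ⟩ := exists_flag_mem hP x
    obtain ⟨y, ⟨hyΦ, hyr⟩, -⟩ := hP.flag_ranks Φ (rk x - 1) (by have := rk_ge hP x; omega)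
      (by have := rk_le hP x; omega)
    have hcov : y ⋖ x := by
      refine ⟨flag_lt hP hyΦ hΦ (by omega), fun z hz1 hz2 => ?_⟩
      have := hP.rk_strictMono hz1
      have h2 := hP.rk_strictMono hz2
      have h3 := rk_ge hP z
      omega
    have hgcov : g y ⋖ g x := (apply_covBy_apply_iff g).2 hcov
    have h4 := hP.rk_cover _ _ hgcov
    have h5 := ih y (by omega)
    omega

end APGen

namespace APGen2
open APGen

variable {α : Type*} [PartialOrder α] [BoundedOrder α] {rk : α → ℤ} {d : ℕ}

theorem map_mul_flag (g h : α ≃o α) (Φ : Flag α) :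
    Flag.map (g * h) Φ = Flag.map g (Flag.map h Φ) := by
  apply Flag.ext
  rw [Flag.coe_map, Flag.coe_map, Flag.coe_map]
  exact Set.image_comp g h Φ

theorem map_one_flag (Φ : Flag α) : Flag.map (1 : α ≃o α) Φ = Φ := by
  apply Flag.ext
  rw [Flag.coe_map]
  exact Set.image_id _

variable (hP : IsAbstractPolytope α rk d)
include hP

theorem mem_map_iff (g : α ≃o α) (Φ : Flag α) (x : α) :
    x ∈ Flag.map g Φ ↔ g.symm x ∈ Φ := by
  rw [← Flag.mem_coe_iff, Flag.coe_map]
  constructor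
  · rintro ⟨a, ha, rfl⟩; simpa using ha
  · intro h'; exact ⟨g.symm x, h', g.apply_symm_apply x⟩

theorem adj_map (g : α ≃o α) {i : ℤ} {Φ Ψ : Flag α} (h : IsIAdjacent rk i Φ Ψ) :
    IsIAdjacent rk i (Flag.map g Φ) (Flag.map g Ψ) := by
  constructor
  · intro he
    exact h.1 ((Flag.map g).injective he)
  · intro x hx
    rw [mem_map_iff hP, mem_map_iff hP]
    apply h.2
    rw [← rk_map hP g (g.symm x), g.apply_symm_apply]
    exact hx

/-- the key commutation: if `Λ` is `j`-adjacent to `w`, `Λ'` is `i`-adjacent to `Λ` and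
`Θ` is `i`-adjacent to `w` with `i + 1 < j`, then `Θ` is `j`-adjacent to `Λ'`. -/
theorem adj_swap {i j : ℤ} (hij : i + 1 < j) {w Λ Λ' Θ : Flag α}
    (h1 : IsIAdjacent rk j Λ w) (h2 : IsIAdjacent rk i Λ Λ')
    (h3 : IsIAdjacent rk i w Θ) : IsIAdjacent rk j Λ' Θ := by
  obtain ⟨hi0, hid⟩ := adj_bounds hP h2
  obtain ⟨hj0, hjd⟩ := adj_bounds hP h1
  -- the rank-j elements
  obtain ⟨v, ⟨hvΛ, hrv⟩, -⟩ := hP.flag_ranks Λ j (by omega) (by omega)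
  obtain ⟨u, ⟨huw, hru⟩, -⟩ := hP.flag_ranks w j (by omega) (by omega)
  have hvu : v ≠ u := adj_ne hP h1 hvΛ hrv huw hru
  -- the rank i-1, i, i+1 elements of Λ
  obtain ⟨a, ⟨haΛ, hra⟩, -⟩ := hP.flag_ranks Λ (i - 1) (by omega) (by omega)
  obtain ⟨c, ⟨hcΛ, hrc⟩, -⟩ := hP.flag_ranks Λ (i + 1) (by omega) (by omega)
  obtain ⟨x, ⟨hxΛ, hrx⟩, -⟩ := hP.flag_ranks Λ i (by omega) (by omega)
  have haw : a ∈ w := (h1.2 a (by omega)).1 haΛ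
  have hcw : c ∈ w := (h1.2 c (by omega)).1 hcΛ
  have hxw : x ∈ w := (h1.2 x (by omega)).1 hxΛ
  have haΛ' : a ∈ Λ' := (h2.2 a (by omega)).1 haΛ
  have hcΛ' : c ∈ Λ' := (h2.2 c (by omega)).1 hcΛ
  have haΘ : a ∈ Θ := (h3.2 a (by omega)).1 haw
  have hcΘ : c ∈ Θ := (h3.2 c (by omega)).1 hcw
  -- rank-i elements of Λ' and Θ
  obtain ⟨y, ⟨hyΛ', hry⟩, -⟩ := hP.flag_ranks Λ' i (by omega) (by omega)
  obtain ⟨t, ⟨htΘ, hrt⟩, -⟩ := hP.flag_ranks Θ i (by omega) (by omega)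
  -- diamond
  obtain ⟨p, q, hpq, hchar⟩ := hP.diamond a c (flag_lt hP haΛ hcΛ (by omega)) (by omega)
  have hxm : x = p ∨ x = q := (hchar x).1 ⟨flag_lt hP haΛ hxΛ (by omega), flag_lt hP hxΛ hcΛ (by omega)⟩
  have hym : y = p ∨ y = q := (hchar y).1 ⟨flag_lt hP haΛ' hyΛ' (by omega), flag_lt hP hyΛ' hcΛ' (by omega)⟩
  have htm : t = p ∨ t = q := (hchar t).1 ⟨flag_lt hP haΘ htΘ (by omega), flag_lt hP htΘ hcΘ (by omega)⟩
  have hxy : x ≠ y := adj_ne hP h2 hxΛ hrx hyΛ' hry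
  have hxt : x ≠ t := adj_ne hP h3 hxw hrx htΘ hrt
  have hyt : y = t := by
    rcases hxm with rfl | rfl <;> rcases hym with rfl | rfl <;> rcases htm with rfl | rfl <;> tauto
  -- v ∈ Λ', v ∉ Θ
  have hvΛ' : v ∈ Λ' := (h2.2 v (by omega)).1 hvΛ
  have hvΘ : v ∉ Θ := by
    intro hv
    have : v ∈ w := (h3.2 v (by omega)).2 hv
    exact hvu (flag_eq hP this huw (by omega))
  constructor
  · intro he
    exact hvΘ (he ▸ hvΛ')
  · intro z hz
    rcases eq_or_ne (rk z) i with hr | hr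
    · constructor
      · intro hzΛ'
        rw [flag_eq hP hzΛ' hyΛ' (by omega), hyt]; exact htΘ
      · intro hzΘ
        rw [flag_eq hP hzΘ htΘ (by omega), ← hyt]; exact hyΛ'
    · rw [← h2.2 z hr, h1.2 z hz, h3.2 z hr]

theorem fix_pointwise {g : α ≃o α} {Ψ : Flag α} (h : Flag.map g Ψ = Ψ) {x : α}
    (hx : x ∈ Ψ) : g x = x := by
  have hgx : g x ∈ Ψ := by
    rw [← h, ← Flag.mem_coe_iff, Flag.coe_map]
    exact ⟨x, hx, rfl⟩
  exact flag_eq hP hgx hx (rk_map hP g x)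

theorem free {g : α ≃o α} {Φ : Flag α} (h : Flag.map g Φ = Φ) : g = 1 := by
  have key : ∀ Ω : Flag α, Flag.map g Ω = Ω := by
    intro Ω
    obtain ⟨n, c, hc0, hcl, hadj, -⟩ := hP.connected Φ Ω
    have hall : ∀ k : Fin (n + 1), Flag.map g (c k) = c k := by
      intro k
      induction k using Fin.induction with
      | zero => rw [hc0]; exact h
      | succ k ih =>
        obtain ⟨i, hi⟩ := hadj k
        exact adj_unique hP (ih ▸ adj_map hP g hi) hi
    have := hall (Fin.last n)
    rwa [hcl] at this
  apply RelIso.ext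
  intro x
  obtain ⟨Ω, hΩ⟩ := exists_flag_mem hP x
  exact fix_pointwise hP (key Ω) hΩ

end APGen2

open APGen APGen2

/-- Let `P` be an abstract polytope of rank `d ≥ 2` in class
`2_{{0,…,d-2}}` (combinatorially two-orbit and facet-intransitive). Fix a flag `Φ`, and
suppose `γ₀, …, γ_{d-2}, γ'` are automorphisms with `γᵢ(Φ) = Φ^i` for `i ≤ d - 2` and
`γ'(Φ) = ((Φ^{d-1})^{d-2})^{d-1}`. Then they generate the whole automorphism group. -/
theorem generators_generate {α : Type*} [PartialOrder α] [BoundedOrder α]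
    (rk : α → ℤ) (d : ℕ) (hd : 2 ≤ d)
    (hP : IsAbstractPolytope α rk d)
    (h2 : InClass rk d (Set.Iio (d - 1)))
    (Φ : Flag α) (Ψ : ℕ → Flag α)
    (hΨ : ∀ i : ℕ, i < d → IsIAdjacent rk i Φ (Ψ i))
    (Ω₁ Ω₂ : Flag α)
    (hΩ₁ : IsIAdjacent rk ((d : ℤ) - 2) (Ψ (d - 1)) Ω₁)
    (hΩ₂ : IsIAdjacent rk ((d : ℤ) - 1) Ω₁ Ω₂)
    (γ : ℕ → α ≃o α)
    (hγ : ∀ i : ℕ, i ≤ d - 2 → γ i '' (Φ : Set α) = (Ψ i : Set α))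
    (γ' : α ≃o α) (hγ' : γ' '' (Φ : Set α) = (Ω₂ : Set α)) :
    Subgroup.closure (γ '' Set.Iio (d - 1) ∪ {γ'}) = ⊤ := by
  set S : Set (α ≃o α) := γ '' Set.Iio (d - 1) ∪ {γ'} with hS
  set H : Subgroup (α ≃o α) := Subgroup.closure S with hH
  have hγmem : ∀ n : ℕ, n < d - 1 → γ n ∈ H :=
    fun n hn => Subgroup.subset_closure (Set.mem_union_left _ ⟨n, hn, rfl⟩)
  have hγ'mem : γ' ∈ H := Subgroup.subset_closure (Set.mem_union_right _ rfl)
  have hmapγ : ∀ n : ℕ, n ≤ d - 2 → Flag.map (γ n) Φ = Ψ n :=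
    fun n hn => Flag.ext (by rw [Flag.coe_map]; exact hγ n hn)
  have hmapγ' : Flag.map γ' Φ = Ω₂ := Flag.ext (by rw [Flag.coe_map]; exact hγ')
  have hcast : ((d - 1 : ℕ) : ℤ) = (d : ℤ) - 1 := by omega
  have hΨd : IsIAdjacent rk ((d : ℤ) - 1) Φ (Ψ (d - 1)) := by
    have := hΨ (d - 1) (by omega); rwa [hcast] at this
  let W : Flag α → Prop := fun Λ => ∃ g ∈ H, Flag.map g Φ = Λ
  have claimA : ∀ g ∈ H, ∀ i : ℤ, 0 ≤ i → i ≤ (d : ℤ) - 2 → ∀ Λ : Flag α,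
      IsIAdjacent rk i (Flag.map g Φ) Λ → W Λ := by
    intro g hg i hi0 hi2 Λ hΛ
    lift i to ℕ using hi0 with n
    have hΛ' : Flag.map g (Ψ n) = Λ :=
      adj_unique hP (adj_map hP g (hΨ n (by omega))) hΛ
    exact ⟨g * γ n, mul_mem hg (hγmem n (by omega)),
      by rw [map_mul_flag, hmapγ n (by omega), hΛ']⟩
  have inv : ∀ (Λ Λ' : Flag α) (i : ℤ), IsIAdjacent rk i Λ Λ' →
      (W Λ ∨ ∃ w, W w ∧ IsIAdjacent rk ((d : ℤ) - 1) Λ w) →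
      (W Λ' ∨ ∃ w, W w ∧ IsIAdjacent rk ((d : ℤ) - 1) Λ' w) := by
    intro Λ Λ' i hadj hcase
    obtain ⟨hi0, hid⟩ := adj_bounds hP hadj
    rcases hcase with ⟨g, hg, rfl⟩ | ⟨w, ⟨g, hg, rfl⟩, hw⟩
    · rcases eq_or_lt_of_le hid with heq | hlt
      · exact Or.inr ⟨Flag.map g Φ, ⟨g, hg, rfl⟩, adj_symm (heq ▸ hadj)⟩
      · exact Or.inl (claimA g hg i hi0 (by omega) Λ' hadj)
    · have htri : i = (d : ℤ) - 1 ∨ i = (d : ℤ) - 2 ∨ i + 1 < (d : ℤ) - 1 := by omega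
      rcases htri with h1 | h1 | h1
      · have hΛ' : Λ' = Flag.map g Φ := adj_unique hP (h1 ▸ hadj) hw
        exact Or.inl ⟨g, hg, hΛ'.symm⟩
      · have hb : Λ = Flag.map g (Ψ (d - 1)) :=
          adj_unique hP (adj_symm hw) (adj_map hP g hΨd)
        have hΛ'2 : Λ' = Flag.map g Ω₁ :=
          adj_unique hP (h1 ▸ hadj) (hb ▸ adj_map hP g hΩ₁)
        refine Or.inr ⟨Flag.map g Ω₂,
          ⟨g * γ', mul_mem hg hγ'mem, by rw [map_mul_flag, hmapγ']⟩, ?_⟩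
        rw [hΛ'2]
        exact adj_map hP g hΩ₂
      · lift i to ℕ using hi0 with n
        have hΘadj : IsIAdjacent rk (n : ℤ) (Flag.map g Φ) (Flag.map g (Ψ n)) :=
          adj_map hP g (hΨ n (by omega))
        refine Or.inr ⟨Flag.map g (Ψ n),
          ⟨g * γ n, mul_mem hg (hγmem n (by omega)),
            by rw [map_mul_flag, hmapγ n (by omega)]⟩, ?_⟩
        exact adj_swap hP (by omega) hw hadj hΘadj
  rw [eq_top_iff]
  intro δ _
  obtain ⟨n, c, hc0, hcl, hadjc, -⟩ := hP.connected Φ (Flag.map δ Φ)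
  have hinv : ∀ k : Fin (n + 1), W (c k) ∨ ∃ w, W w ∧ IsIAdjacent rk ((d : ℤ) - 1) (c k) w := by
    intro k
    induction k using Fin.induction with
    | zero =>
      exact Or.inl (by rw [hc0]; exact ⟨1, one_mem _, map_one_flag Φ⟩)
    | succ k ih =>
      obtain ⟨i, hi⟩ := hadjc k
      exact inv _ _ i hi ih
  have hend := hinv (Fin.last n)
  rw [hcl] at hend
  rcases hend with ⟨g, hg, hmap⟩ | ⟨w, ⟨g, hg, rfl⟩, hw⟩
  · have hfix : Flag.map (δ⁻¹ * g) Φ = Φ := by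
      rw [map_mul_flag, hmap, ← map_mul_flag, inv_mul_cancel, map_one_flag]
    have hδg : δ⁻¹ * g = 1 := free hP hfix
    have : δ = g := by
      have := inv_mul_eq_one.mp hδg; exact this
    exact this ▸ hg
  · exfalso
    have hsame : SameFlagOrbit (Flag.map δ Φ) (Flag.map g Φ) :=
      ⟨g * δ⁻¹, by rw [← Flag.coe_map, ← map_mul_flag, mul_assoc, inv_mul_cancel, mul_one]⟩
    have hw' : IsIAdjacent rk ((d - 1 : ℕ) : ℤ) (Flag.map δ Φ) (Flag.map g Φ) := by
      rw [hcast]; exact hw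
    have := (h2.2 _ _ (d - 1) (by omega) hw').1 hsame
    simp at this
end

section
/- Let P₁ and P₂ be abstract polytopes of rank d ≥ 2, both in class 2_{{0, 1, …, d−2}} (combinatorially two-orbit and facet-intransitive). For k = 1, 2, fix a flag Φ_k of P_k and automorphisms γ^k_0, …, γ^k_{d−2}, γ^{k′} ∈ Γ(P_k) with γ^k_i(Φ_k) = Φ_k^i for i ≤ d−2 and γ^{k′}(Φ_k) = ((Φ_k^{d−1})^{d−2})^{d−1}. If there exists a group isomorphism f : Γ(P₁) → Γ(P₂) with f(γ^1_i) = γ^2_i for every i ∈ {0, …, d−2} and f(γ^{1′}) = γ^{2′}, then P₁ and P₂ are order-isomorphic. -/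
/-! Generic definitions about flags, flag orbits, and abstract polytopes. -/

variable {α : Type*} [PartialOrder α]

/-! ### Auxiliary lemmas -/

set_option linter.unusedSectionVars false

namespace APAux

theorem mem_mapFlag_of_mem (γ : α ≃o α) {Φ : Flag α} {x : α} (h : x ∈ Φ) :
    γ x ∈ Flag.map γ Φ := by
  simp only [← SetLike.mem_coe, Flag.coe_map]; exact ⟨x, h, rfl⟩

theorem exists_of_mem_mapFlag {γ : α ≃o α} {Φ : Flag α} {x : α} (h : x ∈ Flag.map γ Φ) :
    ∃ y ∈ Φ, γ y = x := by
  simpa only [← SetLike.mem_coe, Flag.coe_map, Set.mem_image] using h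

theorem mapFlag_mul (γ δ : α ≃o α) (Φ : Flag α) :
    Flag.map (γ * δ) Φ = Flag.map γ (Flag.map δ Φ) := by
  apply Flag.ext; simp only [Flag.coe_map, Set.image_image]
  exact Set.image_congr (fun a _ => rfl)

theorem mapFlag_one (Φ : Flag α) : Flag.map (1 : α ≃o α) Φ = Φ := by
  apply Flag.ext
  rw [Flag.coe_map]
  have : ∀ x : α, (1 : α ≃o α) x = x := fun _ => rfl
  simp [this]

theorem mapFlag_inv_map (γ : α ≃o α) (Φ : Flag α) :
    Flag.map γ⁻¹ (Flag.map γ Φ) = Φ := by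
  rw [← mapFlag_mul, inv_mul_cancel, mapFlag_one]

theorem mapFlag_map_inv (γ : α ≃o α) (Φ : Flag α) :
    Flag.map γ (Flag.map γ⁻¹ Φ) = Φ := by
  rw [← mapFlag_mul, mul_inv_cancel, mapFlag_one]

theorem sameFlagOrbit_symm {Φ Ψ : Flag α} (h : SameFlagOrbit Φ Ψ) : SameFlagOrbit Ψ Φ := by
  obtain ⟨γ, hγ⟩ := h
  refine ⟨γ⁻¹, ?_⟩
  rw [← hγ, ← Set.image_comp]
  have : ∀ a ∈ (Φ : Set α), ((γ⁻¹ : α ≃o α) ∘ γ) a = id a := fun a _ => γ.symm_apply_apply a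
  rw [Set.image_congr this, Set.image_id]

theorem sameFlagOrbit_trans {Φ Ψ Ω : Flag α} (h : SameFlagOrbit Φ Ψ)
    (h' : SameFlagOrbit Ψ Ω) : SameFlagOrbit Φ Ω := by
  obtain ⟨γ, hγ⟩ := h; obtain ⟨δ, hδ⟩ := h'
  exact ⟨δ * γ, by rw [← hδ, ← hγ, ← Set.image_comp]; exact Set.image_congr (fun a _ => rfl)⟩

theorem sameFlagOrbit_iff_map {Φ Ψ : Flag α} :
    SameFlagOrbit Φ Ψ ↔ ∃ γ : α ≃o α, Flag.map γ Ψ = Φ := by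
  constructor
  · rintro ⟨γ, hγ⟩
    refine ⟨γ⁻¹, ?_⟩
    have h2 : Flag.map γ Φ = Ψ := Flag.ext (by rw [Flag.coe_map, hγ])
    rw [← h2, mapFlag_inv_map]
  · rintro ⟨γ, rfl⟩
    exact sameFlagOrbit_symm ⟨γ, (Flag.coe_map γ Ψ).symm⟩

theorem exists_flag_mem (x : α) : ∃ Φ : Flag α, x ∈ Φ := by
  have hch : IsChain (· ≤ ·) ({x} : Set α) := Set.subsingleton_singleton.isChain
  obtain ⟨M, hM, hsub⟩ := hch.exists_maxChain
  exact ⟨Flag.ofIsMaxChain M hM, hsub rfl⟩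

theorem exists_flag_pair {x y : α} (hxy : x ≤ y) : ∃ Φ : Flag α, x ∈ Φ ∧ y ∈ Φ := by
  have hch : IsChain (· ≤ ·) {x, y} := by
    intro a ha b hb _
    rcases ha with rfl | ha <;> rcases hb with rfl | hb
    · exact Or.inl le_rfl
    · rw [Set.mem_singleton_iff] at hb; subst hb; exact Or.inl hxy
    · rw [Set.mem_singleton_iff] at ha; subst ha; exact Or.inr hxy
    · rw [Set.mem_singleton_iff] at ha hb; subst ha; subst hb; exact Or.inl le_rfl
  obtain ⟨M, hM, hsub⟩ := hch.exists_maxChain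
  exact ⟨Flag.ofIsMaxChain M hM, hsub (Or.inl rfl), hsub (Or.inr rfl)⟩

section Polytope

variable [BoundedOrder α] {rk : α → ℤ} {d : ℕ}

theorem rk_ge (hP : IsAbstractPolytope α rk d) (x : α) : -1 ≤ rk x := by
  have h := hP.rk_strictMono.monotone (bot_le : ⊥ ≤ x)
  rw [hP.rk_bot] at h; exact h

theorem rk_le (hP : IsAbstractPolytope α rk d) (x : α) : rk x ≤ d := by
  have h := hP.rk_strictMono.monotone (le_top : x ≤ ⊤)
  rw [hP.rk_top] at h; exact h

theorem eq_bot_of_rk (hP : IsAbstractPolytope α rk d) {x : α} (h : rk x ≤ -1) : x = ⊥ := by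
  by_contra hne
  have := hP.rk_strictMono (lt_of_le_of_ne bot_le (Ne.symm hne))
  rw [hP.rk_bot] at this; omega

theorem eq_top_of_rk (hP : IsAbstractPolytope α rk d) {x : α} (h : (d : ℤ) ≤ rk x) : x = ⊤ := by
  by_contra hne
  have := hP.rk_strictMono (lt_of_le_of_ne le_top hne)
  rw [hP.rk_top] at this; omega

theorem flag_lt (hP : IsAbstractPolytope α rk d) {Φ : Flag α} {x y : α}
    (hx : x ∈ Φ) (hy : y ∈ Φ) (h : rk x < rk y) : x < y := by
  rcases Φ.le_or_le hx hy with h' | h'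
  · exact lt_of_le_of_ne h' (fun he => by subst he; omega)
  · exact absurd (hP.rk_strictMono.monotone h') (by omega)

theorem flag_rk_inj (hP : IsAbstractPolytope α rk d) {Φ : Flag α} {x y : α}
    (hx : x ∈ Φ) (hy : y ∈ Φ) (h : rk x = rk y) : x = y := by
  rcases Φ.le_or_le hx hy with h' | h'
  · rcases eq_or_lt_of_le h' with he | hlt
    · exact he
    · exact absurd (hP.rk_strictMono hlt) (by omega)
  · rcases eq_or_lt_of_le h' with he | hlt
    · exact he.symm
    · exact absurd (hP.rk_strictMono hlt) (by omega)

theorem rk_map (hP : IsAbstractPolytope α rk d) (γ : α ≃o α) (x : α) : rk (γ x) = rk x := by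
  suffices h : ∀ (n : ℕ) (y : α), (rk y + 1).toNat = n → rk (γ y) = rk y by
    exact h (rk x + 1).toNat x rfl
  intro n
  induction n with
  | zero =>
    intro y hy
    have h1 := rk_ge hP y
    have h2 : rk y = -1 := by omega
    have h3 : y = ⊥ := eq_bot_of_rk hP (by omega)
    subst h3
    rw [OrderIso.map_bot γ, h2]
  | succ n ih =>
    intro y hy
    have h1 := rk_ge hP y
    have h0 : 0 ≤ rk y := by omega
    obtain ⟨Φ, hΦ⟩ := exists_flag_mem y
    obtain ⟨z, ⟨hzΦ, hzr⟩, -⟩ := hP.flag_ranks Φ (rk y - 1) (by omega)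
      (by have := rk_le hP y; omega)
    have hzy : z < y := flag_lt hP hzΦ hΦ (by omega)
    have hcov : z ⋖ y := by
      refine ⟨hzy, fun w hw1 hw2 => ?_⟩
      have := hP.rk_strictMono hw1
      have := hP.rk_strictMono hw2
      omega
    have hcov' : γ z ⋖ γ y := (apply_covBy_apply_iff γ).2 hcov
    have := hP.rk_cover _ _ hcov'
    have := ih z (by omega)
    omega

theorem adj_symm {i : ℤ} {Φ Ψ : Flag α} (h : IsIAdjacent rk i Φ Ψ) : IsIAdjacent rk i Ψ Φ :=
  ⟨h.1.symm, fun x hx => (h.2 x hx).symm⟩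

theorem adj_map (hP : IsAbstractPolytope α rk d) (γ : α ≃o α) {i : ℤ} {Φ Ψ : Flag α}
    (h : IsIAdjacent rk i Φ Ψ) : IsIAdjacent rk i (Flag.map γ Φ) (Flag.map γ Ψ) := by
  constructor
  · intro he
    exact h.1 (by
      have := congrArg (Flag.map γ⁻¹) he
      rwa [mapFlag_inv_map, mapFlag_inv_map] at this)
  · intro x hx
    constructor
    · intro hm
      obtain ⟨y, hy, rfl⟩ := exists_of_mem_mapFlag hm
      exact mem_mapFlag_of_mem γ ((h.2 y (by rwa [rk_map hP] at hx)).mp hy)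
    · intro hm
      obtain ⟨y, hy, rfl⟩ := exists_of_mem_mapFlag hm
      exact mem_mapFlag_of_mem γ ((h.2 y (by rwa [rk_map hP] at hx)).mpr hy)

/-- If two `i`-adjacent flags both contain elements of rank `i`, those elements differ. -/
theorem adj_ne_elt (hP : IsAbstractPolytope α rk d) {i : ℤ} {Φ Ψ : Flag α}
    (h : IsIAdjacent rk i Φ Ψ) {x y : α} (hx : x ∈ Φ) (hy : y ∈ Ψ)
    (hxr : rk x = i) (hyr : rk y = i) : x ≠ y := by
  rintro rfl
  refine h.1 (Flag.ext (Set.ext fun z => ?_))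
  simp only [SetLike.mem_coe]
  by_cases hz : rk z = i
  · constructor
    · intro hzΦ; rwa [flag_rk_inj hP hzΦ hx (by omega)]
    · intro hzΨ; rwa [flag_rk_inj hP hzΨ hy (by omega)]
  · exact h.2 z hz

theorem adj_rk_ne (hP : IsAbstractPolytope α rk d) {i : ℤ} {Φ Ψ : Flag α}
    (h : IsIAdjacent rk i Φ Ψ) {x : α} (hx : x ∈ Φ) (hy : x ∈ Ψ) : rk x ≠ i :=
  fun hr => adj_ne_elt hP h hx hy hr hr rfl

theorem adj_bounds (hP : IsAbstractPolytope α rk d) {i : ℤ} {Φ Ψ : Flag α}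
    (h : IsIAdjacent rk i Φ Ψ) : 0 ≤ i ∧ i ≤ (d : ℤ) - 1 := by
  have hne : ∃ x : α, ¬ (x ∈ Φ ↔ x ∈ Ψ) := by
    by_contra hc
    push_neg at hc
    exact h.1 (Flag.ext (Set.ext fun z => by simpa using hc z))
  obtain ⟨x, hx⟩ := hne
  have hxr : rk x = i := by
    by_contra hr
    exact hx (h.2 x hr)
  have h1 : x ≠ ⊥ := by
    rintro rfl
    exact hx ⟨fun _ => Ψ.bot_mem, fun _ => Φ.bot_mem⟩
  have h2 : x ≠ ⊤ := by
    rintro rfl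
    exact hx ⟨fun _ => Ψ.top_mem, fun _ => Φ.top_mem⟩
  have h3 := rk_ge hP x
  have h4 := rk_le hP x
  have h5 : rk x ≠ -1 := fun hc => h1 (eq_bot_of_rk hP (by omega))
  have h6 : rk x ≠ d := fun hc => h2 (eq_top_of_rk hP (by omega))
  omega

theorem adj_unique (hP : IsAbstractPolytope α rk d) {i : ℤ} {Φ Ψ Ψ' : Flag α}
    (h : IsIAdjacent rk i Φ Ψ) (h' : IsIAdjacent rk i Φ Ψ') : Ψ = Ψ' := by
  obtain ⟨hi0, hi1⟩ := adj_bounds hP h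
  have hdle := rk_le hP (⊤ : α)
  obtain ⟨u, ⟨huΦ, hur⟩, -⟩ := hP.flag_ranks Φ (i - 1) (by omega) (by omega)
  obtain ⟨v, ⟨hvΦ, hvr⟩, -⟩ := hP.flag_ranks Φ (i + 1) (by omega) (by omega)
  obtain ⟨w, ⟨hwΦ, hwr⟩, -⟩ := hP.flag_ranks Φ i (by omega) (by omega)
  obtain ⟨z, ⟨hzΨ, hzr⟩, -⟩ := hP.flag_ranks Ψ i (by omega) (by omega)
  obtain ⟨z', ⟨hzΨ', hzr'⟩, -⟩ := hP.flag_ranks Ψ' i (by omega) (by omega)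
  have huΨ : u ∈ Ψ := (h.2 u (by omega)).mp huΦ
  have hvΨ : v ∈ Ψ := (h.2 v (by omega)).mp hvΦ
  have huΨ' : u ∈ Ψ' := (h'.2 u (by omega)).mp huΦ
  have hvΨ' : v ∈ Ψ' := (h'.2 v (by omega)).mp hvΦ
  have hzw : w ≠ z := adj_ne_elt hP h hwΦ hzΨ hwr hzr
  have hzw' : w ≠ z' := adj_ne_elt hP h' hwΦ hzΨ' hwr hzr'
  obtain ⟨a, b, hab, hspec⟩ := hP.diamond u v (flag_lt hP huΦ hvΦ (by omega)) (by omega)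
  have hw : w = a ∨ w = b := (hspec w).mp
    ⟨flag_lt hP huΦ hwΦ (by omega), flag_lt hP hwΦ hvΦ (by omega)⟩
  have hz : z = a ∨ z = b := (hspec z).mp
    ⟨flag_lt hP huΨ hzΨ (by omega), flag_lt hP hzΨ hvΨ (by omega)⟩
  have hz' : z' = a ∨ z' = b := (hspec z').mp
    ⟨flag_lt hP huΨ' hzΨ' (by omega), flag_lt hP hzΨ' hvΨ' (by omega)⟩
  have hzz : z = z' := by
    rcases hw with rfl | rfl <;> rcases hz with rfl | rfl <;> rcases hz' with rfl | rfl <;>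
      first | rfl | (exact absurd rfl hzw) | (exact absurd rfl hzw')
  refine Flag.ext (Set.ext fun x => ?_)
  simp only [SetLike.mem_coe]
  by_cases hx : rk x = i
  · constructor
    · intro hm
      rw [flag_rk_inj hP hm hzΨ (by omega), hzz]; exact hzΨ'
    · intro hm
      rw [flag_rk_inj hP hm hzΨ' (by omega), ← hzz]; exact hzΨ
  · exact ((h.2 x hx).symm.trans (h'.2 x hx))

theorem stab_trivial (hP : IsAbstractPolytope α rk d) {Φ : Flag α} {γ δ : α ≃o α}
    (h : Flag.map γ Φ = Flag.map δ Φ) : γ = δ := by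
  set σ : α ≃o α := δ⁻¹ * γ with hσdef
  have hσ : Flag.map σ Φ = Φ := by
    rw [hσdef, mapFlag_mul, h, mapFlag_inv_map]
  have hfix : ∀ Ξ : Flag α, Flag.map σ Ξ = Ξ → ∀ x ∈ Ξ, σ x = x := by
    intro Ξ hΞ x hx
    have h1 : σ x ∈ Ξ := hΞ ▸ mem_mapFlag_of_mem σ hx
    exact flag_rk_inj hP h1 hx (rk_map hP σ x)
  have hall : ∀ Ξ : Flag α, Flag.map σ Ξ = Ξ := by
    intro Ξ
    obtain ⟨n, c, hc0, hclast, hadj, -⟩ := hP.connected Φ Ξ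
    have key : ∀ k : Fin (n+1), Flag.map σ (c k) = c k := by
      intro k
      induction k using Fin.induction with
      | zero => rw [hc0, hσ]
      | succ k ih =>
        obtain ⟨i, hi⟩ := hadj k
        have h2 : IsIAdjacent rk i (c k.castSucc) (Flag.map σ (c k.succ)) := by
          have h3 := adj_map hP σ hi
          rwa [ih] at h3
        exact adj_unique hP h2 hi
    rw [← hclast, key]
  have hid : ∀ x, σ x = x := by
    intro x
    obtain ⟨Ξ, hΞ⟩ := exists_flag_mem x
    exact hfix Ξ (hall Ξ) x hΞ
  have hσ1 : δ⁻¹ * γ = 1 := hσdef ▸ OrderIso.ext (funext hid)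
  exact (inv_mul_eq_one.mp hσ1).symm

end Polytope

end APAux

namespace APAux

section Polytope

variable [BoundedOrder α] {rk : α → ℤ} {d : ℕ}

/-- Key step: an automorphism realizing an `m`-adjacency at the base flag `Φ` also
realizes an `m`-adjacency at the `(d-1)`-adjacent flag `Λ`, provided `m < d - 2`. -/
theorem lam_step (hP : IsAbstractPolytope α rk d) {Φ Λ A : Flag α} {σ : α ≃o α} {m : ℤ}
    (hΦΛ : IsIAdjacent rk ((d : ℤ) - 1) Φ Λ) (hΦA : IsIAdjacent rk m Φ A)
    (hm0 : 0 ≤ m) (hm : m < (d : ℤ) - 2) (hσ : Flag.map σ Φ = A) :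
    IsIAdjacent rk m Λ (Flag.map σ Λ) := by
  have hdtop := hP.rk_top
  obtain ⟨b, ⟨hbΛ, hbr⟩, -⟩ := hP.flag_ranks Λ ((d : ℤ) - 1) (by omega) (by omega)
  obtain ⟨w, ⟨hwΦ, hwr⟩, -⟩ := hP.flag_ranks Φ ((d : ℤ) - 1) (by omega) (by omega)
  obtain ⟨u, ⟨huΦ, hur⟩, -⟩ := hP.flag_ranks Φ ((d : ℤ) - 2) (by omega) (by omega)
  have huΛ : u ∈ Λ := (hΦΛ.2 u (by omega)).mp huΦ
  have huA : u ∈ A := (hΦA.2 u (by omega)).mp huΦ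
  have hfixΦ : ∀ x, x ∈ Φ → rk x ≠ m → σ x = x := by
    intro x hx hxr
    have h1 : σ x ∈ A := hσ ▸ mem_mapFlag_of_mem σ hx
    have h2 : x ∈ A := (hΦA.2 x hxr).mp hx
    exact flag_rk_inj hP h1 h2 (rk_map hP σ x)
  have hbw : b ≠ w := adj_ne_elt hP (adj_symm hΦΛ) hbΛ hwΦ hbr hwr
  have hub : u < b := flag_lt hP huΛ hbΛ (by omega)
  have hbtop : b < ⊤ := lt_of_le_of_ne le_top (fun he => by rw [he, hdtop] at hbr; omega)
  have huw : u < w := flag_lt hP huΦ hwΦ (by omega)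
  have hwtop : w < ⊤ := lt_of_le_of_ne le_top (fun he => by rw [he, hdtop] at hwr; omega)
  have hσu : σ u = u := hfixΦ u huΦ (by omega)
  have hσb : σ b = b := by
    by_contra hne
    obtain ⟨a1, a2, h12, hspec⟩ := hP.diamond u ⊤ (lt_of_lt_of_le hub le_top) (by omega)
    have hσb1 : u < σ b := by rw [← hσu]; exact σ.strictMono hub
    have hσb2 : σ b < ⊤ := lt_of_le_of_ne le_top
      (fun he => by have h3 := rk_map hP σ b; rw [he, hdtop] at h3; omega)
    have c1 := (hspec b).mp ⟨hub, hbtop⟩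
    have c2 := (hspec w).mp ⟨huw, hwtop⟩
    have c3 := (hspec (σ b)).mp ⟨hσb1, hσb2⟩
    have hσbw : σ b = w := by
      rcases c1 with hb1 | hb1
      · rcases c3 with hs1 | hs1
        · exact absurd (hs1.trans hb1.symm) hne
        · rcases c2 with hw1 | hw1
          · exact absurd (hb1.trans hw1.symm) hbw
          · rw [hs1, ← hw1]
      · rcases c3 with hs1 | hs1
        · rcases c2 with hw1 | hw1
          · rw [hs1, ← hw1]
          · exact absurd (hb1.trans hw1.symm) hbw
        · exact absurd (hs1.trans hb1.symm) hne
    have hBA : Flag.map σ Λ = A := by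
      apply Flag.ext
      refine (Flag.map σ Λ).max_chain' A.chain_le ?_
      intro x hx
      have hx' : x ∈ (Flag.map σ Λ : Set α) := hx
      rw [Flag.coe_map] at hx'
      obtain ⟨y, hy, rfl⟩ := hx'
      simp only [SetLike.mem_coe] at hy ⊢
      by_cases h1 : rk y = (d : ℤ) - 1
      · have hyb : y = b := flag_rk_inj hP hy hbΛ (by omega)
        subst hyb
        rw [hσbw]
        exact (hΦA.2 w (by omega)).mp hwΦ
      · have hyΦ : y ∈ Φ := (hΦΛ.2 y h1).mpr hy
        by_cases h2 : rk y = m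
        · exact hσ ▸ mem_mapFlag_of_mem σ hyΦ
        · rw [hfixΦ y hyΦ h2]
          exact (hΦA.2 y h2).mp hyΦ
    have hΛΦ : Λ = Φ := (Flag.map σ).injective (hBA.trans hσ.symm)
    exact hΦΛ.1 hΛΦ.symm
  constructor
  · intro he
    have hσ1 : σ = 1 := stab_trivial hP (Φ := Λ) (δ := 1) (by rw [← he, mapFlag_one])
    exact hΦA.1 (by rw [← hσ, hσ1, mapFlag_one])
  · intro x hxr
    constructor
    · intro hxΛ
      by_cases h1 : rk x = (d : ℤ) - 1
      · have hxb : x = b := flag_rk_inj hP hxΛ hbΛ (by omega)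
        subst hxb
        rw [← hσb]
        exact mem_mapFlag_of_mem σ hbΛ
      · have hxΦ : x ∈ Φ := (hΦΛ.2 x h1).mpr hxΛ
        rw [← hfixΦ x hxΦ hxr]
        exact mem_mapFlag_of_mem σ hxΛ
    · intro hxB
      obtain ⟨y, hyΛ, rfl⟩ := exists_of_mem_mapFlag hxB
      have hyr : rk (σ y) = rk y := rk_map hP σ y
      by_cases h1 : rk y = (d : ℤ) - 1
      · have hyb : y = b := flag_rk_inj hP hyΛ hbΛ (by omega)
        subst hyb
        rw [hσb]
        exact hyΛ
      · have hyΦ : y ∈ Φ := (hΦΛ.2 y h1).mpr hyΛ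
        rw [hfixΦ y hyΦ (by omega)]
        exact hyΛ

end Polytope

theorem transfer {α₁ α₂ : Type*}
    [PartialOrder α₁] [BoundedOrder α₁] [PartialOrder α₂] [BoundedOrder α₂]
    (rk₁ : α₁ → ℤ) (rk₂ : α₂ → ℤ) (d : ℕ) (hd : 2 ≤ d)
    (hP₁ : IsAbstractPolytope α₁ rk₁ d) (hP₂ : IsAbstractPolytope α₂ rk₂ d)
    (hc₁ : InClass rk₁ d (Set.Iio (d - 1)))
    (Φ₁ : Flag α₁) (Ψ₁ : ℕ → Flag α₁)
    (hΨ₁ : ∀ i : ℕ, i < d → IsIAdjacent rk₁ i Φ₁ (Ψ₁ i))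
    (Ω₁₁ Ω₁₂ : Flag α₁)
    (hΩ₁₁ : IsIAdjacent rk₁ ((d : ℤ) - 2) (Ψ₁ (d - 1)) Ω₁₁)
    (hΩ₁₂ : IsIAdjacent rk₁ ((d : ℤ) - 1) Ω₁₁ Ω₁₂)
    (γ₁ : ℕ → α₁ ≃o α₁)
    (hγ₁ : ∀ i : ℕ, i ≤ d - 2 → γ₁ i '' (Φ₁ : Set α₁) = (Ψ₁ i : Set α₁))
    (γ₁' : α₁ ≃o α₁) (hγ₁' : γ₁' '' (Φ₁ : Set α₁) = (Ω₁₂ : Set α₁))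
    (Φ₂ : Flag α₂) (Ψ₂ : ℕ → Flag α₂)
    (hΨ₂ : ∀ i : ℕ, i < d → IsIAdjacent rk₂ i Φ₂ (Ψ₂ i))
    (Ω₂₁ Ω₂₂ : Flag α₂)
    (hΩ₂₁ : IsIAdjacent rk₂ ((d : ℤ) - 2) (Ψ₂ (d - 1)) Ω₂₁)
    (hΩ₂₂ : IsIAdjacent rk₂ ((d : ℤ) - 1) Ω₂₁ Ω₂₂)
    (γ₂ : ℕ → α₂ ≃o α₂)
    (hγ₂ : ∀ i : ℕ, i ≤ d - 2 → γ₂ i '' (Φ₂ : Set α₂) = (Ψ₂ i : Set α₂))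
    (γ₂' : α₂ ≃o α₂) (hγ₂' : γ₂' '' (Φ₂ : Set α₂) = (Ω₂₂ : Set α₂))
    (f : (α₁ ≃o α₁) → (α₂ ≃o α₂))
    (fmul : ∀ a b : α₁ ≃o α₁, f (a * b) = f a * f b)
    (hf : ∀ i : ℕ, i ≤ d - 2 → f (γ₁ i) = γ₂ i)
    (hf' : f γ₁' = γ₂') :
    ∃ (T : Flag α₁ → Flag α₂) (g : α₁ → α₂),
      (∀ γ : α₁ ≃o α₁, T (Flag.map γ Φ₁) = Flag.map (f γ) Φ₂) ∧
      (∀ γ : α₁ ≃o α₁, T (Flag.map γ (Ψ₁ (d - 1))) = Flag.map (f γ) (Ψ₂ (d - 1))) ∧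
      (∀ Ξ : Flag α₁, (∃ γ, Flag.map γ Φ₁ = Ξ) ∨ (∃ γ, Flag.map γ (Ψ₁ (d - 1)) = Ξ)) ∧
      (∀ x : α₁, rk₂ (g x) = rk₁ x) ∧
      (∀ (x : α₁) (Ξ : Flag α₁), x ∈ Ξ → g x ∈ T Ξ) := by
  set Λ₁ := Ψ₁ (d - 1) with hΛ₁def
  set Λ₂ := Ψ₂ (d - 1) with hΛ₂def
  have hd1 : d - 1 < d := by omega
  have hcast : ((d - 1 : ℕ) : ℤ) = (d : ℤ) - 1 := by omega
  have adj₁ : IsIAdjacent rk₁ ((d : ℤ) - 1) Φ₁ Λ₁ := by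
    have h := hΨ₁ (d - 1) hd1; rwa [hcast] at h
  have adj₂ : IsIAdjacent rk₂ ((d : ℤ) - 1) Φ₂ Λ₂ := by
    have h := hΨ₂ (d - 1) hd1; rwa [hcast] at h
  have ndis : ¬ SameFlagOrbit Φ₁ Λ₁ := by
    intro hs
    have h := (hc₁.2 Φ₁ Λ₁ (d - 1) hd1 (hΨ₁ (d - 1) hd1)).mp hs
    simp only [Set.mem_Iio, lt_self_iff_false] at h
  have cover : ∀ Ξ : Flag α₁, (∃ γ, Flag.map γ Φ₁ = Ξ) ∨ (∃ γ, Flag.map γ Λ₁ = Ξ) := by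
    intro Ξ
    obtain ⟨A, B, hAB, hcov⟩ := hc₁.1
    have hΞ := hcov Ξ
    rcases hcov Φ₁ with h1 | h1 <;> rcases hcov Λ₁ with h2 | h2
    · exact absurd (sameFlagOrbit_trans h1 (sameFlagOrbit_symm h2)) ndis
    · rcases hΞ with h | h
      · exact Or.inl (sameFlagOrbit_iff_map.mp (sameFlagOrbit_trans h (sameFlagOrbit_symm h1)))
      · exact Or.inr (sameFlagOrbit_iff_map.mp (sameFlagOrbit_trans h (sameFlagOrbit_symm h2)))
    · rcases hΞ with h | h
      · exact Or.inr (sameFlagOrbit_iff_map.mp (sameFlagOrbit_trans h (sameFlagOrbit_symm h2)))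
      · exact Or.inl (sameFlagOrbit_iff_map.mp (sameFlagOrbit_trans h (sameFlagOrbit_symm h1)))
    · exact absurd (sameFlagOrbit_trans h1 (sameFlagOrbit_symm h2)) ndis
  have A1 : ∀ m : ℕ, m ≤ d - 2 → Flag.map (γ₁ m) Φ₁ = Ψ₁ m :=
    fun m hm => Flag.ext (by rw [Flag.coe_map]; exact hγ₁ m hm)
  have A2 : ∀ m : ℕ, m ≤ d - 2 → Flag.map (γ₂ m) Φ₂ = Ψ₂ m :=
    fun m hm => Flag.ext (by rw [Flag.coe_map]; exact hγ₂ m hm)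
  have A1' : Flag.map γ₁' Φ₁ = Ω₁₂ := Flag.ext (by rw [Flag.coe_map]; exact hγ₁')
  have A2' : Flag.map γ₂' Φ₂ = Ω₂₂ := Flag.ext (by rw [Flag.coe_map]; exact hγ₂')
  have base1 : ∀ m : ℕ, m ≤ d - 2 → IsIAdjacent rk₁ (m : ℤ) Φ₁ (Flag.map (γ₁ m) Φ₁) := by
    intro m hm; rw [A1 m hm]; exact hΨ₁ m (by omega)
  have base2 : ∀ m : ℕ, m ≤ d - 2 → IsIAdjacent rk₂ (m : ℤ) Φ₂ (Flag.map (γ₂ m) Φ₂) := by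
    intro m hm; rw [A2 m hm]; exact hΨ₂ m (by omega)
  have lam1 : ∀ m : ℕ, m < d - 2 → IsIAdjacent rk₁ (m : ℤ) Λ₁ (Flag.map (γ₁ m) Λ₁) := by
    intro m hm
    exact lam_step hP₁ adj₁ (hΨ₁ m (by omega)) (by omega) (by omega) (A1 m (by omega))
  have lam2 : ∀ m : ℕ, m < d - 2 → IsIAdjacent rk₂ (m : ℤ) Λ₂ (Flag.map (γ₂ m) Λ₂) := by
    intro m hm
    exact lam_step hP₂ adj₂ (hΨ₂ m (by omega)) (by omega) (by omega) (A2 m (by omega))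
  have lamA1' : Flag.map γ₁' Λ₁ = Ω₁₁ := by
    have h1 : IsIAdjacent rk₁ ((d : ℤ) - 1) Ω₁₂ (Flag.map γ₁' Λ₁) := by
      have h2 := adj_map hP₁ γ₁' adj₁
      rwa [A1'] at h2
    exact adj_unique hP₁ h1 (adj_symm hΩ₁₂)
  have lamA2' : Flag.map γ₂' Λ₂ = Ω₂₁ := by
    have h1 : IsIAdjacent rk₂ ((d : ℤ) - 1) Ω₂₂ (Flag.map γ₂' Λ₂) := by
      have h2 := adj_map hP₂ γ₂' adj₂
      rwa [A2'] at h2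
    exact adj_unique hP₂ h1 (adj_symm hΩ₂₂)
  have lam1' : IsIAdjacent rk₁ ((d : ℤ) - 2) Λ₁ (Flag.map γ₁' Λ₁) := by
    rw [lamA1']; exact hΩ₁₁
  have lam2' : IsIAdjacent rk₂ ((d : ℤ) - 2) Λ₂ (Flag.map γ₂' Λ₂) := by
    rw [lamA2']; exact hΩ₂₁
  -- the flag correspondence
  have hT : ∀ Ξ : Flag α₁, ∃ Θ : Flag α₂,
      (∀ γ, Flag.map γ Φ₁ = Ξ → Θ = Flag.map (f γ) Φ₂) ∧
      (∀ γ, Flag.map γ Λ₁ = Ξ → Θ = Flag.map (f γ) Λ₂) := by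
    intro Ξ
    have disj : ∀ γ δ : α₁ ≃o α₁, Flag.map γ Φ₁ = Ξ → Flag.map δ Λ₁ = Ξ → False := by
      intro γ δ h1 h2
      exact ndis (sameFlagOrbit_trans (sameFlagOrbit_symm (sameFlagOrbit_iff_map.mpr ⟨γ, h1⟩))
        (sameFlagOrbit_iff_map.mpr ⟨δ, h2⟩))
    rcases cover Ξ with ⟨γ₀, h0⟩ | ⟨γ₀, h0⟩
    · refine ⟨Flag.map (f γ₀) Φ₂, fun γ hγ => ?_, fun γ hγ => (disj γ₀ γ h0 hγ).elim⟩
      rw [stab_trivial hP₁ (h0.trans hγ.symm)]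
    · refine ⟨Flag.map (f γ₀) Λ₂, fun γ hγ => (disj γ γ₀ hγ h0).elim, fun γ hγ => ?_⟩
      rw [stab_trivial hP₁ (h0.trans hγ.symm)]
  choose T hTa hTb using hT
  have T1 : ∀ γ : α₁ ≃o α₁, T (Flag.map γ Φ₁) = Flag.map (f γ) Φ₂ := fun γ => hTa _ γ rfl
  have T2 : ∀ γ : α₁ ≃o α₁, T (Flag.map γ Λ₁) = Flag.map (f γ) Λ₂ := fun γ => hTb _ γ rfl
  -- T preserves adjacency
  have Tadj : ∀ (Ξ Ξ' : Flag α₁) (i : ℤ), IsIAdjacent rk₁ i Ξ Ξ' →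
      IsIAdjacent rk₂ i (T Ξ) (T Ξ') := by
    intro Ξ Ξ' i hadj
    obtain ⟨hi0, hi1⟩ := adj_bounds hP₁ hadj
    set m : ℕ := i.toNat with hmdef
    have him : (m : ℤ) = i := by omega
    rcases cover Ξ with ⟨γ, rfl⟩ | ⟨γ, rfl⟩
    · have hadj' : IsIAdjacent rk₁ i Φ₁ (Flag.map γ⁻¹ Ξ') := by
        have h := adj_map hP₁ γ⁻¹ hadj
        rwa [mapFlag_inv_map] at h
      by_cases hcase : m ≤ d - 2
      · have hb := base1 m hcase
        rw [him] at hb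
        have he : Flag.map γ⁻¹ Ξ' = Flag.map (γ₁ m) Φ₁ := adj_unique hP₁ hadj' hb
        have hΞ' : Ξ' = Flag.map (γ * γ₁ m) Φ₁ := by
          rw [mapFlag_mul, ← he, mapFlag_map_inv]
        rw [hΞ', T1, T1, fmul, hf m hcase, mapFlag_mul]
        have h := adj_map hP₂ (f γ) (base2 m hcase)
        rwa [him] at h
      · have hieq : i = (d : ℤ) - 1 := by omega
        have he : Flag.map γ⁻¹ Ξ' = Λ₁ := adj_unique hP₁ hadj' (by rw [hieq]; exact adj₁)
        have hΞ' : Ξ' = Flag.map γ Λ₁ := by rw [← he, mapFlag_map_inv]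
        rw [hΞ', T1, T2]
        have h := adj_map hP₂ (f γ) adj₂
        rwa [← hieq] at h
    · have hadj' : IsIAdjacent rk₁ i Λ₁ (Flag.map γ⁻¹ Ξ') := by
        have h := adj_map hP₁ γ⁻¹ hadj
        rwa [mapFlag_inv_map] at h
      rcases (show m < d - 2 ∨ m = d - 2 ∨ m = d - 1 by omega) with hcase | hcase | hcase
      · have hb := lam1 m hcase
        rw [him] at hb
        have he : Flag.map γ⁻¹ Ξ' = Flag.map (γ₁ m) Λ₁ := adj_unique hP₁ hadj' hb
        have hΞ' : Ξ' = Flag.map (γ * γ₁ m) Λ₁ := by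
          rw [mapFlag_mul, ← he, mapFlag_map_inv]
        rw [hΞ', T2, T2, fmul, hf m (by omega), mapFlag_mul]
        have h := adj_map hP₂ (f γ) (lam2 m hcase)
        rwa [him] at h
      · have hieq : i = (d : ℤ) - 2 := by omega
        have he : Flag.map γ⁻¹ Ξ' = Flag.map γ₁' Λ₁ :=
          adj_unique hP₁ hadj' (by rw [hieq]; exact lam1')
        have hΞ' : Ξ' = Flag.map (γ * γ₁') Λ₁ := by
          rw [mapFlag_mul, ← he, mapFlag_map_inv]
        rw [hΞ', T2, T2, fmul, hf', mapFlag_mul]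
        have h := adj_map hP₂ (f γ) lam2'
        rwa [← hieq] at h
      · have hieq : i = (d : ℤ) - 1 := by omega
        have he : Flag.map γ⁻¹ Ξ' = Φ₁ :=
          adj_unique hP₁ hadj' (by rw [hieq]; exact adj_symm adj₁)
        have hΞ' : Ξ' = Flag.map γ Φ₁ := by rw [← he, mapFlag_map_inv]
        rw [hΞ', T2, T1]
        have h := adj_map hP₂ (f γ) (adj_symm adj₂)
        rwa [← hieq] at h
  -- the element correspondence
  have hg : ∀ x : α₁, ∃ y : α₂, rk₂ y = rk₁ x ∧ ∀ Ξ : Flag α₁, x ∈ Ξ → y ∈ T Ξ := by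
    intro x
    obtain ⟨Ξ₀, hΞ₀⟩ := exists_flag_mem x
    obtain ⟨y, ⟨hyT, hyr⟩, -⟩ := hP₂.flag_ranks (T Ξ₀) (rk₁ x) (rk_ge hP₁ x) (rk_le hP₁ x)
    refine ⟨y, hyr, ?_⟩
    intro Ξ hxΞ
    obtain ⟨n, c, hc0, hclast, hadjc, hmemc⟩ := hP₁.connected Ξ₀ Ξ
    have key : ∀ k : Fin (n + 1), y ∈ T (c k) := by
      intro k
      induction k using Fin.induction with
      | zero => rw [hc0]; exact hyT
      | succ k ih =>
        obtain ⟨i, hi⟩ := hadjc k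
        have hxk : x ∈ c k.castSucc := hmemc k.castSucc ⟨hΞ₀, hxΞ⟩
        have hxk1 : x ∈ c k.succ := hmemc k.succ ⟨hΞ₀, hxΞ⟩
        have hne : rk₁ x ≠ i := adj_rk_ne hP₁ hi hxk hxk1
        exact ((Tadj _ _ i hi).2 y (by omega)).mp ih
    have h := key (Fin.last n); rwa [hclast] at h
  choose g hg1 hg2 using hg
  exact ⟨T, g, T1, T2, cover, hg1, hg2⟩

end APAux
/-- Two abstract polytopes of rank `d ≥ 2`, both in class `2_{{0,…,d-2}}`,
whose automorphism groups are isomorphic by an isomorphism matching distinguished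
generators (taken with respect to base flags), are order-isomorphic. -/
theorem same_group_same_polytope {α₁ α₂ : Type*}
    [PartialOrder α₁] [BoundedOrder α₁] [PartialOrder α₂] [BoundedOrder α₂]
    (rk₁ : α₁ → ℤ) (rk₂ : α₂ → ℤ) (d : ℕ) (hd : 2 ≤ d)
    (hP₁ : IsAbstractPolytope α₁ rk₁ d) (hP₂ : IsAbstractPolytope α₂ rk₂ d)
    (hc₁ : InClass rk₁ d (Set.Iio (d - 1))) (hc₂ : InClass rk₂ d (Set.Iio (d - 1)))
    (Φ₁ : Flag α₁) (Ψ₁ : ℕ → Flag α₁)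
    (hΨ₁ : ∀ i : ℕ, i < d → IsIAdjacent rk₁ i Φ₁ (Ψ₁ i))
    (Ω₁₁ Ω₁₂ : Flag α₁)
    (hΩ₁₁ : IsIAdjacent rk₁ ((d : ℤ) - 2) (Ψ₁ (d - 1)) Ω₁₁)
    (hΩ₁₂ : IsIAdjacent rk₁ ((d : ℤ) - 1) Ω₁₁ Ω₁₂)
    (γ₁ : ℕ → α₁ ≃o α₁)
    (hγ₁ : ∀ i : ℕ, i ≤ d - 2 → γ₁ i '' (Φ₁ : Set α₁) = (Ψ₁ i : Set α₁))
    (γ₁' : α₁ ≃o α₁) (hγ₁' : γ₁' '' (Φ₁ : Set α₁) = (Ω₁₂ : Set α₁))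
    (Φ₂ : Flag α₂) (Ψ₂ : ℕ → Flag α₂)
    (hΨ₂ : ∀ i : ℕ, i < d → IsIAdjacent rk₂ i Φ₂ (Ψ₂ i))
    (Ω₂₁ Ω₂₂ : Flag α₂)
    (hΩ₂₁ : IsIAdjacent rk₂ ((d : ℤ) - 2) (Ψ₂ (d - 1)) Ω₂₁)
    (hΩ₂₂ : IsIAdjacent rk₂ ((d : ℤ) - 1) Ω₂₁ Ω₂₂)
    (γ₂ : ℕ → α₂ ≃o α₂)
    (hγ₂ : ∀ i : ℕ, i ≤ d - 2 → γ₂ i '' (Φ₂ : Set α₂) = (Ψ₂ i : Set α₂))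
    (γ₂' : α₂ ≃o α₂) (hγ₂' : γ₂' '' (Φ₂ : Set α₂) = (Ω₂₂ : Set α₂))
    (f : (α₁ ≃o α₁) ≃* (α₂ ≃o α₂))
    (hf : ∀ i : ℕ, i ≤ d - 2 → f (γ₁ i) = γ₂ i)
    (hf' : f γ₁' = γ₂') :
    Nonempty (α₁ ≃o α₂) := by
  classical
  have hf2 : ∀ i : ℕ, i ≤ d - 2 → f.symm (γ₂ i) = γ₁ i := fun i hi => by
    rw [← hf i hi, MulEquiv.symm_apply_apply]
  have hf2' : f.symm γ₂' = γ₁' := by rw [← hf', MulEquiv.symm_apply_apply]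
  obtain ⟨T, g, T1, T2, cover1, hg1, hg2⟩ :=
    APAux.transfer rk₁ rk₂ d hd hP₁ hP₂ hc₁ Φ₁ Ψ₁ hΨ₁ Ω₁₁ Ω₁₂ hΩ₁₁ hΩ₁₂ γ₁ hγ₁ γ₁' hγ₁'
      Φ₂ Ψ₂ hΨ₂ Ω₂₁ Ω₂₂ hΩ₂₁ hΩ₂₂ γ₂ hγ₂ γ₂' hγ₂' (fun a => f a) (fun a b => map_mul f a b)
      hf hf'
  obtain ⟨T', g', T1', T2', cover2, hg1', hg2'⟩ :=
    APAux.transfer rk₂ rk₁ d hd hP₂ hP₁ hc₂ Φ₂ Ψ₂ hΨ₂ Ω₂₁ Ω₂₂ hΩ₂₁ hΩ₂₂ γ₂ hγ₂ γ₂' hγ₂'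
      Φ₁ Ψ₁ hΨ₁ Ω₁₁ Ω₁₂ hΩ₁₁ hΩ₁₂ γ₁ hγ₁ γ₁' hγ₁' (fun a => f.symm a)
      (fun a b => map_mul f.symm a b) hf2 hf2'
  have TT : ∀ Ξ : Flag α₁, T' (T Ξ) = Ξ := by
    intro Ξ
    rcases cover1 Ξ with ⟨γ, rfl⟩ | ⟨γ, rfl⟩
    · rw [T1, T1', MulEquiv.symm_apply_apply]
    · rw [T2, T2', MulEquiv.symm_apply_apply]
  have TT' : ∀ Θ : Flag α₂, T (T' Θ) = Θ := by
    intro Θ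
    rcases cover2 Θ with ⟨γ, rfl⟩ | ⟨γ, rfl⟩
    · rw [T1', T1, MulEquiv.apply_symm_apply]
    · rw [T2', T2, MulEquiv.apply_symm_apply]
  have gleft : ∀ x : α₁, g' (g x) = x := by
    intro x
    obtain ⟨Ξ, hΞ⟩ := APAux.exists_flag_mem x
    have h1 : g x ∈ T Ξ := hg2 x Ξ hΞ
    have h2 : g' (g x) ∈ T' (T Ξ) := hg2' (g x) (T Ξ) h1
    rw [TT] at h2
    exact APAux.flag_rk_inj hP₁ h2 hΞ (by rw [hg1', hg1])
  have gright : ∀ y : α₂, g (g' y) = y := by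
    intro y
    obtain ⟨Θ, hΘ⟩ := APAux.exists_flag_mem y
    have h1 : g' y ∈ T' Θ := hg2' y Θ hΘ
    have h2 : g (g' y) ∈ T (T' Θ) := hg2 (g' y) (T' Θ) h1
    rw [TT'] at h2
    exact APAux.flag_rk_inj hP₂ h2 hΘ (by rw [hg1, hg1'])
  have gmono : ∀ x y : α₁, x ≤ y → g x ≤ g y := by
    intro x y hxy
    rcases eq_or_lt_of_le hxy with rfl | hlt
    · exact le_rfl
    · obtain ⟨Ξ, hx, hy⟩ := APAux.exists_flag_pair hxy
      exact le_of_lt (APAux.flag_lt hP₂ (hg2 x Ξ hx) (hg2 y Ξ hy)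
        (by rw [hg1, hg1]; exact hP₁.rk_strictMono hlt))
  have gmono' : ∀ x y : α₂, x ≤ y → g' x ≤ g' y := by
    intro x y hxy
    rcases eq_or_lt_of_le hxy with rfl | hlt
    · exact le_rfl
    · obtain ⟨Θ, hx, hy⟩ := APAux.exists_flag_pair hxy
      exact le_of_lt (APAux.flag_lt hP₁ (hg2' x Θ hx) (hg2' y Θ hy)
        (by rw [hg1', hg1']; exact hP₂.rk_strictMono hlt))
  refine ⟨⟨⟨g, g', gleft, gright⟩, ?_⟩⟩
  intro a b
  show g a ≤ g b ↔ a ≤ b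
  constructor
  · intro h
    have h2 := gmono' _ _ h
    rwa [gleft, gleft] at h2
  · exact gmono a b
end

section
/- Define sequences a, b, c of natural numbers by a₁ = 0, b₁ = 0, c₁ = 20 and, for n ≥ 1, a_{n+1} = a_n + 2b_n + 3c_n, b_{n+1} = 2a_n + 5b_n + 9c_n, c_{n+1} = 4a_n + 12b_n + 25c_n. Then for every n ≥ 1, the partial sum S_n = Σ_{k=1}^{n} (a_k + b_k + c_k) satisfies S_n = (5/7)·( (9/(2√14))·((15 + 4√14)^n − (15 − 4√14)^n) − 8n ). -/
/-- Let `a₁ = b₁ = 0`, `c₁ = 20`, and for `n ≥ 1` let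
`a_{n+1} = aₙ + 2bₙ + 3cₙ`, `b_{n+1} = 2aₙ + 5bₙ + 9cₙ`, `c_{n+1} = 4aₙ + 12bₙ + 25cₙ`.
Then the partial sums `Sₙ = Σ_{k=1}^n (a_k + b_k + c_k)` satisfy
`Sₙ = (5/7) ((9/(2√14)) ((15 + 4√14)ⁿ − (15 − 4√14)ⁿ) − 8n)`. -/
theorem patch_tile_count (a b c : ℕ → ℕ)
    (ha1 : a 1 = 0) (hb1 : b 1 = 0) (hc1 : c 1 = 20)
    (ha : ∀ n : ℕ, 1 ≤ n → a (n + 1) = a n + 2 * b n + 3 * c n)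
    (hb : ∀ n : ℕ, 1 ≤ n → b (n + 1) = 2 * a n + 5 * b n + 9 * c n)
    (hc : ∀ n : ℕ, 1 ≤ n → c (n + 1) = 4 * a n + 12 * b n + 25 * c n)
    (n : ℕ) (hn : 1 ≤ n) :
    ((∑ k ∈ Finset.Icc 1 n, (a k + b k + c k) : ℕ) : ℝ) =
      (5 / 7) * ((9 / (2 * Real.sqrt 14)) *
        ((15 + 4 * Real.sqrt 14) ^ n - (15 - 4 * Real.sqrt 14) ^ n) - 8 * n) := by
  set s : ℝ := Real.sqrt 14 with hsdef
  have hs : s ^ 2 = 14 := Real.sq_sqrt (by norm_num)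
  have hspos : 0 < s := Real.sqrt_pos.mpr (by norm_num)
  have key : ∀ m : ℕ, 1 ≤ m →
      ((a m : ℝ) = -30/7 + (225/7 - 60/7*s) * (15 + 4*s) ^ m
          + (225/7 + 60/7*s) * (15 - 4*s) ^ m) ∧
      ((b m : ℝ) = -30/7 + (-195/7 + 15/2*s) * (15 + 4*s) ^ m
          + (-195/7 - 15/2*s) * (15 - 4*s) ^ m) ∧
      ((c m : ℝ) = 20/7 + (60/7 - 15/7*s) * (15 + 4*s) ^ m
          + (60/7 + 15/7*s) * (15 - 4*s) ^ m) ∧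
      (((∑ k ∈ Finset.Icc 1 m, (a k + b k + c k) : ℕ) : ℝ) =
        (45*s/196) * ((15 + 4*s) ^ m - (15 - 4*s) ^ m) - 40*m/7) := by
    intro m hm
    induction m, hm using Nat.le_induction with
    | base =>
      refine ⟨?_, ?_, ?_, ?_⟩
      · rw [ha1]; push_cast; linear_combination (480/7 : ℝ) * hs
      · rw [hb1]; push_cast; linear_combination (-60 : ℝ) * hs
      · rw [hc1]; push_cast; linear_combination (120/7 : ℝ) * hs
      · simp [ha1, hb1, hc1]; linear_combination (-90/49 : ℝ) * hs
    | succ k hk ih =>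
      obtain ⟨iha, ihb, ihc, ihS⟩ := ih
      have Ha : (a (k+1) : ℝ) = -30/7 + (225/7 - 60/7*s) * (15 + 4*s) ^ (k+1)
          + (225/7 + 60/7*s) * (15 - 4*s) ^ (k+1) := by
        rw [ha k hk]; push_cast
        rw [iha, ihb, ihc, pow_succ, pow_succ]
        linear_combination (240/7 * ((15 + 4*s)^k + (15 - 4*s)^k)) * hs
      have Hb : (b (k+1) : ℝ) = -30/7 + (-195/7 + 15/2*s) * (15 + 4*s) ^ (k+1)
          + (-195/7 - 15/2*s) * (15 - 4*s) ^ (k+1) := by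
        rw [hb k hk]; push_cast
        rw [iha, ihb, ihc, pow_succ, pow_succ]
        linear_combination (-30 * ((15 + 4*s)^k + (15 - 4*s)^k)) * hs
      have Hc : (c (k+1) : ℝ) = 20/7 + (60/7 - 15/7*s) * (15 + 4*s) ^ (k+1)
          + (60/7 + 15/7*s) * (15 - 4*s) ^ (k+1) := by
        rw [hc k hk]; push_cast
        rw [iha, ihb, ihc, pow_succ, pow_succ]
        linear_combination (60/7 * ((15 + 4*s)^k + (15 - 4*s)^k)) * hs
      refine ⟨Ha, Hb, Hc, ?_⟩
      rw [Finset.sum_Icc_succ_top (by omega : 1 ≤ k + 1), Nat.cast_add, ihS]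
      push_cast
      rw [Ha, Hb, Hc, pow_succ, pow_succ]
      linear_combination (-675/49 * ((15 + 4*s)^k + (15 - 4*s)^k)) * hs
  have hS := (key n hn).2.2.2
  rw [hS]
  have hs0 : s ≠ 0 := ne_of_gt hspos
  field_simp
  linear_combination (630 * ((15 + 4*s)^n - (15 - 4*s)^n)) * hs
end
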